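/- Let n ≥ 3 be an integer and F a finite field. There exists a pair (h0, h1) ∈ Fⁿ × Fⁿ such that every entry of h0 is nonzero, every entry of h1 is nonzero, and for all indices 1 ≤ i < j ≤ n one has h0,i·h1,j − h0,j·h1,i ≠ 0, if and only if |F| ≥ n + 1. -/
import Mathlib


/-- Let n ≥ 3 and F a finite field. There exists (h0, h1) ∈ Fⁿ × Fⁿ with
every entry of h0 nonzero, every entry of h1 nonzero, and for all 1 ≤ i < j ≤ n,
h0,i·h1,j − h0,j·h1,i ≠ 0, if and only if |F| ≥ n + 1. -/
theorem stmt5 (n : ℕ) (hn : 3 ≤ n) (F : Type*) [Field F] [Fintype F] :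
    (∃ h0 h1 : Fin n → F,
      (∀ i, h0 i ≠ 0) ∧ (∀ i, h1 i ≠ 0) ∧
      ∀ i j : Fin n, i < j → h0 i * h1 j - h0 j * h1 i ≠ 0)
    ↔ n + 1 ≤ Fintype.card F := by
  classical
  constructor
  · rintro ⟨h0, h1, H0, H1, H⟩
    have key : ∀ i j : Fin n, i ≠ j → h0 i * h1 j - h0 j * h1 i ≠ 0 := by
      intro i j hij
      rcases lt_or_gt_of_ne hij with h | h
      · exact H i j h
      · intro hz
        apply H j i h
        have : h0 j * h1 i - h0 i * h1 j = -(h0 i * h1 j - h0 j * h1 i) := by ring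
        rw [this, hz, neg_zero]
    set f : Fin n → Fˣ := fun i => Units.mk0 (h0 i * (h1 i)⁻¹) (by
      exact mul_ne_zero (H0 i) (inv_ne_zero (H1 i))) with hf
    have finj : Function.Injective f := by
      intro i j hij
      by_contra hne
      apply key i j hne
      have : h0 i * (h1 i)⁻¹ = h0 j * (h1 j)⁻¹ := by
        have := congrArg Units.val hij
        simpa [hf] using this
      rw [← div_eq_mul_inv, ← div_eq_mul_inv, div_eq_div_iff (H1 i) (H1 j)] at this
      rw [sub_eq_zero, this]
    have h1' : n ≤ Fintype.card Fˣ := by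
      simpa using Fintype.card_le_of_injective f finj
    have h2 : Fintype.card Fˣ = Fintype.card F - 1 := by
      convert Fintype.card_units (α := F)
    have h3 : 1 ≤ Fintype.card F := Fintype.card_pos
    omega
  · intro hcard
    have h2 : Fintype.card Fˣ = Fintype.card F - 1 := by
      convert Fintype.card_units (α := F)
    have hle : Fintype.card (Fin n) ≤ Fintype.card Fˣ := by simp; omega
    obtain ⟨g⟩ := Function.Embedding.nonempty_of_card_le hle
    refine ⟨fun i => (g i : F), fun _ => 1, fun i => Units.ne_zero (g i), fun i => one_ne_zero, ?_⟩
    intro i j hij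
    simp only [mul_one, sub_ne_zero]
    intro hz
    exact hij.ne (g.injective (Units.ext hz))
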